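/- Let Γ be a finitely generated residually finite discrete group with finite generating set S, and let N₁ ⊇ N₂ ⊇ … be a nested sequence of finite-index normal subgroups of Γ with trivial intersection. Let X be a coarse disjoint union of the finite Cayley graphs X_i = Cay(Γ/N_i, S) (a box space of Γ). If X admits a fibred coarse embedding into Hilbert space, then Γ is a-T-menable: there exists a function f : Γ → ℝ such that (i) f(e) = 0 and f(g) = f(g⁻¹) for all g ∈ Γ; (ii) for all g₁, …, g_n ∈ Γ and σ₁, …, σ_n ∈ ℝ with Σ_j σ_j = 0 one has Σ_{j,k} σ_j σ_k f(g_j⁻¹ g_k) ≤ 0; and (iii) f is proper, i.e. for every C > 0 the set {g ∈ Γ : f(g) ≤ C} is finite. -/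

import Mathlib

open scoped RealInnerProductSpace

lemma aux_cnd {E : Type*} [NormedAddCommGroup E] [InnerProductSpace ℝ E] {n : ℕ}
    (σ : Fin n → ℝ) (v : Fin n → E) (hσ : ∑ j, σ j = 0) :
    ∑ j, ∑ k, σ j * σ k * ‖v j - v k‖ ^ 2 ≤ 0 := by
  have hip : ‖∑ j, σ j • v j‖ ^ 2 = ∑ j, ∑ k, σ j * σ k * ⟪v j, v k⟫ := by
    rw [← real_inner_self_eq_norm_sq, sum_inner]
    refine Finset.sum_congr rfl fun j _ => ?_
    rw [real_inner_smul_left, inner_sum, Finset.mul_sum]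
    refine Finset.sum_congr rfl fun k _ => ?_
    rw [real_inner_smul_right]; ring
  have h1 : ∑ j, ∑ k, σ j * σ k * ‖v j‖ ^ 2 = 0 := by
    have : ∀ j, ∑ k, σ j * σ k * ‖v j‖ ^ 2 = σ j * ‖v j‖ ^ 2 * ∑ k, σ k := fun j => by
      rw [Finset.mul_sum]; exact Finset.sum_congr rfl fun k _ => by ring
    simp [this, hσ]
  have h2 : ∑ j, ∑ k, σ j * σ k * ‖v k‖ ^ 2 = 0 := by
    have : ∀ j, ∑ k, σ j * σ k * ‖v k‖ ^ 2 = σ j * ∑ k, σ k * ‖v k‖ ^ 2 := fun j => by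
      rw [Finset.mul_sum]; exact Finset.sum_congr rfl fun k _ => by ring
    simp only [this, ← Finset.sum_mul, hσ, zero_mul]
  have key : ∑ j, ∑ k, σ j * σ k * ‖v j - v k‖ ^ 2
      = (∑ j, ∑ k, σ j * σ k * ‖v j‖ ^ 2) + (∑ j, ∑ k, σ j * σ k * ‖v k‖ ^ 2)
        - 2 * ∑ j, ∑ k, σ j * σ k * ⟪v j, v k⟫ := by
    rw [Finset.mul_sum, ← Finset.sum_add_distrib, ← Finset.sum_sub_distrib]
    refine Finset.sum_congr rfl fun j _ => ?_
    rw [Finset.mul_sum, ← Finset.sum_add_distrib, ← Finset.sum_sub_distrib]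
    refine Finset.sum_congr rfl fun k _ => ?_
    rw [norm_sub_sq_real]; ring
  rw [key, h1, h2, ← hip]
  nlinarith [sq_nonneg ‖∑ j, σ j • v j‖]

lemma aux_finite_words {Γ : Type*} [Group Γ] (S : Finset Γ) (m : ℕ) :
    {g : Γ | ∃ w : List Γ, w.length ≤ m ∧ (∀ a ∈ w, a ∈ S ∨ a⁻¹ ∈ S) ∧ w.prod = g}.Finite := by
  induction m with
  | zero =>
    refine Set.Finite.subset (Set.finite_singleton (1 : Γ)) ?_
    rintro g ⟨w, hw, _, rfl⟩
    rw [Nat.le_zero, List.length_eq_zero_iff] at hw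
    simp [hw]
  | succ m ih =>
    refine Set.Finite.subset (ih.union ((((S.finite_toSet).union
      ((S.finite_toSet).image (·⁻¹))).image2 (· * ·) ih)) ) ?_
    rintro g ⟨w, hw, hmem, rfl⟩
    match w with
    | [] => exact Or.inl ⟨[], by simp⟩
    | a :: w' =>
      right
      refine Set.mem_image2.2 ⟨a, ?_, w'.prod, ⟨w', ?_, fun b hb => hmem b (List.mem_cons_of_mem a hb), rfl⟩, by simp⟩
      · rcases hmem a (List.mem_cons_self (a := a) (l := w')) with h | h
        · exact Or.inl h
        · exact Or.inr ⟨a⁻¹, h, inv_inv a⟩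
      · simpa using Nat.succ_le_succ_iff.mp hw

lemma aux_exists_word {Γ : Type*} [Group Γ] (S : Finset Γ)
    (hgen : Subgroup.closure (S : Set Γ) = ⊤) (g : Γ) :
    ∃ w : List Γ, (∀ a ∈ w, a ∈ S ∨ a⁻¹ ∈ S) ∧ w.prod = g := by
  have hg : g ∈ Subgroup.closure (S : Set Γ) := by rw [hgen]; exact Subgroup.mem_top g
  refine Subgroup.closure_induction ?_ ?_ ?_ ?_ hg
  · intro x hx; exact ⟨[x], by simpa using Or.inl hx, by simp⟩
  · exact ⟨[], by simp, by simp⟩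
  · rintro x y _ _ ⟨w₁, h₁, rfl⟩ ⟨w₂, h₂, rfl⟩
    exact ⟨w₁ ++ w₂, fun a ha => (List.mem_append.1 ha).elim (h₁ a) (h₂ a), by rw [List.prod_append]⟩
  · rintro x _ ⟨w, h, rfl⟩
    refine ⟨(w.map fun a => a⁻¹).reverse, ?_, (List.prod_inv_reverse w).symm⟩
    intro a ha
    rw [List.mem_reverse, List.mem_map] at ha
    obtain ⟨b, hb, rfl⟩ := ha
    rcases h b hb with h' | h'
    · exact Or.inr (by simpa using h')
    · exact Or.inl h'


/-- The word metric on a quotient group `Γ ⧸ N` induced by (the image of) a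
generating set `S ⊆ Γ`: the least length of a word in `S ∪ S⁻¹` translating
one coset to the other. -/
noncomputable def quotientWordDist {Γ : Type*} [Group Γ] (S : Finset Γ)
    {N : Subgroup Γ} (x y : Γ ⧸ N) : ℕ :=
  sInf {n : ℕ | ∃ w : List Γ, w.length = n ∧ (∀ g ∈ w, g ∈ S ∨ g⁻¹ ∈ S) ∧ w.prod • x = y}

/-- Let `Γ` be a finitely generated residually finite group with
finite generating set `S`, and `N₁ ⊇ N₂ ⊇ …` nested finite-index normal
subgroups with trivial intersection.  Let `X = ⊔ᵢ Cay(Γ/Nᵢ, S)` be a coarse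
disjoint union of the finite Cayley graphs (a box space of `Γ`).  If `X` admits
a fibred coarse embedding into Hilbert space, then `Γ` is a-T-menable: there is
`f : Γ → ℝ` with `f(e) = 0`, `f(g) = f(g⁻¹)`, of conditionally negative type,
and proper (`{g : f(g) ≤ C}` finite for every `C > 0`). -/
theorem box_space_fibred_coarse_embedding_implies_aTmenable
    (Γ : Type*) [Group Γ] (S : Finset Γ)
    (hgen : Subgroup.closure (S : Set Γ) = ⊤)
    (N : ℕ → Subgroup Γ)
    (hnorm : ∀ i, (N i).Normal)
    (hFI : ∀ i, (N i).FiniteIndex)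
    (hnested : ∀ i, N (i + 1) ≤ N i)
    (htriv : (⨅ i, N i) = ⊥)
    -- `X` is a coarse disjoint union of the Cayley graphs `Cay(Γ/Nᵢ, S)`
    [MetricSpace ((i : ℕ) × (Γ ⧸ N i))]
    (hword : ∀ (i : ℕ) (a b : Γ ⧸ N i),
      dist (⟨i, a⟩ : (i : ℕ) × (Γ ⧸ N i)) (⟨i, b⟩ : (i : ℕ) × (Γ ⧸ N i))
        = (quotientWordDist S a b : ℝ))
    (hsep : ∀ C : ℝ, ∃ M : ℕ, ∀ x y : (i : ℕ) × (Γ ⧸ N i),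
      x.1 ≠ y.1 → M ≤ x.1 + y.1 → C ≤ dist x y)
    -- fibred coarse embedding data for `X`
    (H : ((i : ℕ) × (Γ ⧸ N i)) → Type*)
    [∀ x, NormedAddCommGroup (H x)] [∀ x, InnerProductSpace ℝ (H x)]
    (s : ∀ x, H x)
    (ρ₁ ρ₂ : ℝ → ℝ) (hρ₁mono : Monotone ρ₁) (hρ₂mono : Monotone ρ₂)
    (hρ₁ : Filter.Tendsto ρ₁ Filter.atTop Filter.atTop)
    (hρ₂ : Filter.Tendsto ρ₂ Filter.atTop Filter.atTop)
    (l : ℕ → ℝ) (hl0 : 0 ≤ l 0) (hlmono : Monotone l)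
    (hl : Filter.Tendsto l Filter.atTop Filter.atTop)
    (E : Type*) [NormedAddCommGroup E] [InnerProductSpace ℝ E]
    (t : ∀ (_x z : (i : ℕ) × (Γ ⧸ N i)), H z →ᵃⁱ[ℝ] E)
    -- condition (1): control of the section through each local trivialisation
    (ht1 : ∀ x z z' : (i : ℕ) × (Γ ⧸ N i),
      dist z x ≤ l x.1 → dist z' x ≤ l x.1 →
      ρ₁ (dist z z') ≤ ‖t x z (s z) - t x z' (s z')‖ ∧
      ‖t x z (s z) - t x z' (s z')‖ ≤ ρ₂ (dist z z'))
    -- condition (2): compatibility isometries on overlapping balls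
    (ht2 : ∀ x y : (i : ℕ) × (Γ ⧸ N i), x.1 = y.1 →
      (∃ w : (i : ℕ) × (Γ ⧸ N i), dist w x ≤ l x.1 ∧ dist w y ≤ l y.1) →
      ∃ T : E →ᵃⁱ[ℝ] E, ∀ z : (i : ℕ) × (Γ ⧸ N i),
        dist z x ≤ l x.1 → dist z y ≤ l y.1 →
        ∀ v : H z, t x z v = T (t y z v)) :
    -- conclusion: `Γ` is a-T-menable
    ∃ f : Γ → ℝ,
      f 1 = 0 ∧
      (∀ g : Γ, f g = f g⁻¹) ∧
      (∀ (n : ℕ) (g : Fin n → Γ) (σ : Fin n → ℝ), ∑ j, σ j = 0 →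
        ∑ j, ∑ k, σ j * σ k * f ((g j)⁻¹ * g k) ≤ 0) ∧
      (∀ C : ℝ, 0 < C → {g : Γ | f g ≤ C}.Finite) := by
  classical
  choose wd hwd1 hwd2 using aux_exists_word S hgen
  have hlnn : ∀ i, 0 ≤ l i := fun i => hl0.trans (hlmono (Nat.zero_le i))
  have hq : ∀ (i : ℕ) (k : Γ) (a b : Γ ⧸ N i), k • a = b →
      dist (⟨i, a⟩ : (i : ℕ) × (Γ ⧸ N i)) ⟨i, b⟩ ≤ ((wd k).length : ℝ) := by
    intro i k a b hk
    rw [hword]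
    have : quotientWordDist S a b ≤ (wd k).length :=
      Nat.sInf_le ⟨wd k, rfl, hwd1 k, by rw [hwd2 k, hk]⟩
    exact_mod_cast this
  letI instF : ∀ i : ℕ, Fintype (Γ ⧸ N i) := fun i =>
    @Fintype.ofFinite _ (@Subgroup.finite_quotient_of_finiteIndex _ _ _ (hFI i))
  haveI hNE : ∀ i : ℕ, Nonempty (Γ ⧸ N i) := fun i => ⟨((1 : Γ) : Γ ⧸ N i)⟩
  set c : ℕ → ℝ := fun i => (Fintype.card (Γ ⧸ N i) : ℝ) with hcdef
  have hc : ∀ i, 0 < c i := fun i => by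
    have := Fintype.card_pos (α := Γ ⧸ N i)
    simp only [hcdef]
    exact_mod_cast this
  set u : ∀ i : ℕ, (Γ ⧸ N i) → (Γ ⧸ N i) → E :=
    fun i x z => t ⟨i, x⟩ ⟨i, z⟩ (s ⟨i, z⟩) with hudef
  set φ : ℕ → Γ → ℝ :=
    fun i g => (c i)⁻¹ * ∑ x : Γ ⧸ N i, ‖u i x (g • x) - u i x x‖ ^ 2 with hφdef
  have hφ0 : ∀ i g, 0 ≤ φ i g := fun i g =>
    mul_nonneg (inv_nonneg.2 (hc i).le) (Finset.sum_nonneg fun x _ => sq_nonneg _)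
  have hself : ∀ (i : ℕ) (x : Γ ⧸ N i),
      dist (⟨i, x⟩ : (i : ℕ) × (Γ ⧸ N i)) ⟨i, x⟩ ≤ l i := by
    intro i x; rw [dist_self]; exact hlnn i
  have hbase : ∀ (i : ℕ) (x y z z' : Γ ⧸ N i),
      dist (⟨i, z⟩ : (i : ℕ) × (Γ ⧸ N i)) ⟨i, x⟩ ≤ l i →
      dist (⟨i, z'⟩ : (i : ℕ) × (Γ ⧸ N i)) ⟨i, x⟩ ≤ l i →
      dist (⟨i, z⟩ : (i : ℕ) × (Γ ⧸ N i)) ⟨i, y⟩ ≤ l i →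
      dist (⟨i, z'⟩ : (i : ℕ) × (Γ ⧸ N i)) ⟨i, y⟩ ≤ l i →
      ‖u i x z - u i x z'‖ = ‖u i y z - u i y z'‖ := by
    intro i x y z z' h1 h2 h3 h4
    obtain ⟨T, hT⟩ := ht2 ⟨i, x⟩ ⟨i, y⟩ rfl ⟨⟨i, z⟩, h1, h3⟩
    simp only [hudef]
    rw [hT ⟨i, z⟩ h1 h3, hT ⟨i, z'⟩ h2 h4, ← dist_eq_norm, ← dist_eq_norm, T.dist_map]
  set U : Ultrafilter ℕ := Filter.hyperfilter ℕ with hUdef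
  have hUle : (U : Filter ℕ) ≤ Filter.atTop := Nat.hyperfilter_le_atTop
  -- upper bound on φ
  have hub : ∀ (g : Γ) (i : ℕ), ((wd g).length : ℝ) ≤ l i →
      φ i g ≤ max (ρ₂ ((wd g).length)) 0 ^ 2 := by
    intro g i hi
    have hsum : ∑ x : Γ ⧸ N i, ‖u i x (g • x) - u i x x‖ ^ 2
        ≤ ∑ _x : Γ ⧸ N i, max (ρ₂ ((wd g).length)) 0 ^ 2 := by
      refine Finset.sum_le_sum fun x _ => ?_
      have hd : dist (⟨i, g • x⟩ : (i : ℕ) × (Γ ⧸ N i)) ⟨i, x⟩ ≤ ((wd g).length : ℝ) := by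
        rw [dist_comm]; exact hq i g x (g • x) rfl
      have h2 := (ht1 ⟨i, x⟩ ⟨i, g • x⟩ ⟨i, x⟩ (hd.trans hi) (hself i x)).2
      have hle : ‖u i x (g • x) - u i x x‖ ≤ max (ρ₂ ((wd g).length)) 0 := by
        simp only [hudef]
        exact le_max_of_le_left (h2.trans (hρ₂mono hd))
      exact pow_le_pow_left₀ (norm_nonneg _) hle 2
    have hcard : ∑ _x : Γ ⧸ N i, max (ρ₂ ((wd g).length)) 0 ^ 2
        = c i * max (ρ₂ ((wd g).length)) 0 ^ 2 := by
      rw [Finset.sum_const, Finset.card_univ, nsmul_eq_mul, hcdef]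
    have : φ i g ≤ (c i)⁻¹ * (c i * max (ρ₂ ((wd g).length)) 0 ^ 2) := by
      rw [hφdef]
      exact mul_le_mul_of_nonneg_left (hsum.trans_eq hcard) (inv_nonneg.2 (hc i).le)
    rwa [inv_mul_cancel_left₀ (hc i).ne'] at this
  -- existence of ultrafilter limits
  have exlim : ∀ g : Γ, ∃ A : ℝ,
      Filter.Tendsto (fun i => φ i g) (U : Filter ℕ) (nhds A) := by
    intro g
    have hev : ∀ᶠ i in (U : Filter ℕ),
        φ i g ∈ Set.Icc (0 : ℝ) (max (ρ₂ ((wd g).length)) 0 ^ 2) :=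
      Filter.Eventually.filter_mono hUle <|
        (hl.eventually_ge_atTop ((wd g).length : ℝ)).mono fun i hi => ⟨hφ0 i g, hub g i hi⟩
    obtain ⟨A, -, hA⟩ := (isCompact_Icc (a := (0 : ℝ))
        (b := max (ρ₂ ((wd g).length)) 0 ^ 2)).ultrafilter_le_nhds
      (U.map fun i => φ i g)
      (by rw [Ultrafilter.coe_map, Filter.le_principal_iff, Filter.mem_map]; exact hev)
    exact ⟨A, by rwa [Ultrafilter.coe_map] at hA⟩
  choose f hf using exlim
  refine ⟨f, ?_, ?_, ?_, ?_⟩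
  · -- f 1 = 0
    have h0 : (fun i => φ i (1 : Γ)) = fun _ => (0 : ℝ) := by
      funext i
      simp [hφdef, one_smul]
    exact tendsto_nhds_unique (hf 1) (by rw [h0]; exact tendsto_const_nhds)
  · -- symmetry
    intro g
    have hev : ∀ᶠ i in (U : Filter ℕ), φ i g = φ i g⁻¹ := by
      refine Filter.Eventually.filter_mono hUle <|
        (hl.eventually_ge_atTop ((wd g).length : ℝ)).mono fun i hi => ?_
      simp only [hφdef]
      congr 1
      refine Fintype.sum_bijective (fun y : Γ ⧸ N i => g • y) (MulAction.bijective g)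
        _ _ fun y => ?_
      have hd1 : dist (⟨i, y⟩ : (i : ℕ) × (Γ ⧸ N i)) ⟨i, g • y⟩ ≤ l i :=
        (hq i g y (g • y) rfl).trans hi
      have hd2 : dist (⟨i, g • y⟩ : (i : ℕ) × (Γ ⧸ N i)) ⟨i, y⟩ ≤ l i := by
        rw [dist_comm]; exact hd1
      rw [inv_smul_smul, norm_sub_rev]
      rw [hbase i y (g • y) y (g • y) (hself i y) hd2 hd1 (hself i (g • y))]
    exact tendsto_nhds_unique (hf g) ((hf g⁻¹).congr' (hev.mono fun i h => h.symm))
  · -- conditionally negative type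
    intro n g σ hσ
    have htend : Filter.Tendsto
        (fun i => ∑ j, ∑ k, σ j * σ k * φ i ((g j)⁻¹ * g k)) (U : Filter ℕ)
        (nhds (∑ j, ∑ k, σ j * σ k * f ((g j)⁻¹ * g k))) :=
      tendsto_finset_sum _ fun j _ => tendsto_finset_sum _ fun k _ =>
        ((hf ((g j)⁻¹ * g k)).const_mul _)
    refine le_of_tendsto htend ?_
    set B : ℕ := Finset.univ.sup (fun p : Fin n × Fin n =>
      max (wd ((g p.1)⁻¹ * g p.2)).length
        (max (wd (g p.1)).length (wd (g p.2)).length)) with hBdef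
    refine Filter.Eventually.filter_mono hUle <|
      (hl.eventually_ge_atTop (B : ℝ)).mono fun i hi => ?_
    have hBle : ∀ p : Fin n × Fin n,
        (max (wd ((g p.1)⁻¹ * g p.2)).length
          (max (wd (g p.1)).length (wd (g p.2)).length) : ℝ) ≤ l i := by
      intro p
      refine le_trans ?_ hi
      have h := Finset.le_sup (f := fun p : Fin n × Fin n =>
        max (wd ((g p.1)⁻¹ * g p.2)).length
          (max (wd (g p.1)).length (wd (g p.2)).length)) (Finset.mem_univ p)
      exact_mod_cast h
    have hkey : ∀ j k : Fin n, φ i ((g j)⁻¹ * g k)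
        = (c i)⁻¹ * ∑ y : Γ ⧸ N i,
            ‖u i y ((g j)⁻¹ • y) - u i y ((g k)⁻¹ • y)‖ ^ 2 := by
      intro j k
      have hBjk := hBle (k, j)
      have hL1 : ((wd ((g k)⁻¹ * g j)).length : ℝ) ≤ l i :=
        le_trans (le_max_left _ _) hBjk
      have hLj : ((wd (g j)).length : ℝ) ≤ l i :=
        le_trans (le_trans (le_max_left _ _) (le_max_right _ _)) (hBle (j, k))
      have hLk : ((wd (g k)).length : ℝ) ≤ l i :=
        le_trans (le_trans (le_max_right _ _) (le_max_right _ _)) (hBle (j, k))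
      simp only [hφdef]
      congr 1
      refine (Fintype.sum_bijective (fun y : Γ ⧸ N i => (g k)⁻¹ • y)
        (MulAction.bijective ((g k)⁻¹)) _ _ fun y => ?_).symm
      have e1 : ((g j)⁻¹ * g k) • ((g k)⁻¹ • y) = (g j)⁻¹ • y := by
        rw [smul_smul, mul_inv_cancel_right]
      have d1 : dist (⟨i, (g j)⁻¹ • y⟩ : (i : ℕ) × (Γ ⧸ N i)) ⟨i, (g k)⁻¹ • y⟩ ≤ l i := by
        refine le_trans (hq i ((g k)⁻¹ * g j) _ _ ?_) hL1
        rw [smul_smul, mul_inv_cancel_right]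
      have d3 : dist (⟨i, (g j)⁻¹ • y⟩ : (i : ℕ) × (Γ ⧸ N i)) ⟨i, y⟩ ≤ l i := by
        refine le_trans (hq i (g j) _ _ ?_) hLj
        rw [smul_inv_smul]
      have d4 : dist (⟨i, (g k)⁻¹ • y⟩ : (i : ℕ) × (Γ ⧸ N i)) ⟨i, y⟩ ≤ l i := by
        refine le_trans (hq i (g k) _ _ ?_) hLk
        rw [smul_inv_smul]
      rw [e1]
      rw [hbase i ((g k)⁻¹ • y) y ((g j)⁻¹ • y) ((g k)⁻¹ • y) d1
        (hself i ((g k)⁻¹ • y)) d3 d4]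
    have hterm : ∀ j k : Fin n, σ j * σ k * φ i ((g j)⁻¹ * g k)
        = (c i)⁻¹ * ∑ y : Γ ⧸ N i,
            σ j * σ k * ‖u i y ((g j)⁻¹ • y) - u i y ((g k)⁻¹ • y)‖ ^ 2 := by
      intro j k
      rw [hkey j k, ← Finset.mul_sum]
      ring
    calc ∑ j, ∑ k, σ j * σ k * φ i ((g j)⁻¹ * g k)
        = ∑ j, ∑ k, (c i)⁻¹ * ∑ y : Γ ⧸ N i,
            σ j * σ k * ‖u i y ((g j)⁻¹ • y) - u i y ((g k)⁻¹ • y)‖ ^ 2 :=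
          Finset.sum_congr rfl fun j _ => Finset.sum_congr rfl fun k _ => hterm j k
      _ = (c i)⁻¹ * ∑ j, ∑ k, ∑ y : Γ ⧸ N i,
            σ j * σ k * ‖u i y ((g j)⁻¹ • y) - u i y ((g k)⁻¹ • y)‖ ^ 2 := by
          rw [Finset.mul_sum]
          exact Finset.sum_congr rfl fun j _ => (Finset.mul_sum _ _ _).symm
      _ = (c i)⁻¹ * ∑ y : Γ ⧸ N i, ∑ j, ∑ k,
            σ j * σ k * ‖u i y ((g j)⁻¹ • y) - u i y ((g k)⁻¹ • y)‖ ^ 2 := by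
          congr 1
          calc ∑ j, ∑ k, ∑ y : Γ ⧸ N i,
                σ j * σ k * ‖u i y ((g j)⁻¹ • y) - u i y ((g k)⁻¹ • y)‖ ^ 2
              = ∑ j, ∑ y : Γ ⧸ N i, ∑ k,
                σ j * σ k * ‖u i y ((g j)⁻¹ • y) - u i y ((g k)⁻¹ • y)‖ ^ 2 :=
                Finset.sum_congr rfl fun j _ => Finset.sum_comm
            _ = ∑ y : Γ ⧸ N i, ∑ j, ∑ k,
                σ j * σ k * ‖u i y ((g j)⁻¹ • y) - u i y ((g k)⁻¹ • y)‖ ^ 2 :=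
                Finset.sum_comm
      _ ≤ (c i)⁻¹ * 0 := by
          refine mul_le_mul_of_nonneg_left ?_ (inv_nonneg.2 (hc i).le)
          refine Finset.sum_nonpos fun y _ => ?_
          exact aux_cnd σ (fun j => u i y ((g j)⁻¹ • y)) hσ
      _ = 0 := mul_zero _
  · -- properness
    intro C hC
    obtain ⟨R, hR⟩ := (hρ₁.eventually_ge_atTop (Real.sqrt (C + 1))).exists_forall_of_atTop
    set m : ℕ := ⌈R⌉₊ with hmdef
    have hPfin := aux_finite_words S m
    refine Set.Finite.subset (hPfin.image (fun p => p⁻¹)) ?_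
    intro g hg
    simp only [Set.mem_setOf_eq] at hg
    by_contra hgP
    have hne1 : ∀ p : Γ, (∃ w : List Γ, w.length ≤ m ∧
        (∀ a ∈ w, a ∈ S ∨ a⁻¹ ∈ S) ∧ w.prod = p) → p * g ≠ 1 := by
      intro p hp hpg
      exact hgP ⟨p, hp, inv_eq_of_mul_eq_one_right hpg⟩
    have hex : ∀ p : Γ, ∃ ip : ℕ, (∃ w : List Γ, w.length ≤ m ∧
        (∀ a ∈ w, a ∈ S ∨ a⁻¹ ∈ S) ∧ w.prod = p) → p * g ∉ N ip := by
      intro p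
      by_cases hp : ∃ w : List Γ, w.length ≤ m ∧ (∀ a ∈ w, a ∈ S ∨ a⁻¹ ∈ S) ∧ w.prod = p
      · have h1 : ¬ ∀ i, p * g ∈ N i := by
          intro hall
          refine hne1 p hp ?_
          have : p * g ∈ (⊥ : Subgroup Γ) := htriv ▸ Subgroup.mem_iInf.2 hall
          exact Subgroup.mem_bot.1 this
        push_neg at h1
        obtain ⟨ip, hip⟩ := h1
        exact ⟨ip, fun _ => hip⟩
      · exact ⟨0, fun h => absurd h hp⟩
    choose ip hip using hex
    set i₁ : ℕ := hPfin.toFinset.sup ip with hi₁def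
    have hanti : Antitone N := antitone_nat_of_succ_le hnested
    have hip' : ∀ i, i₁ ≤ i → ∀ p : Γ, (∃ w : List Γ, w.length ≤ m ∧
        (∀ a ∈ w, a ∈ S ∨ a⁻¹ ∈ S) ∧ w.prod = p) → p * g ∉ N i := by
      intro i hi p hp hmem
      have h1 : ip p ≤ i :=
        le_trans (Finset.le_sup (hPfin.mem_toFinset.2 hp)) hi
      exact hip p hp (hanti h1 hmem)
    have hev : ∀ᶠ i in Filter.atTop, C + 1 ≤ φ i g := by
      filter_upwards [hl.eventually_ge_atTop ((wd g).length : ℝ),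
        Filter.eventually_ge_atTop i₁] with i hi1 hi2
      have hAll : ∀ x : Γ ⧸ N i,
          (m : ℝ) ≤ dist (⟨i, g • x⟩ : (i : ℕ) × (Γ ⧸ N i)) ⟨i, x⟩ := by
        intro x
        by_contra hlt
        push_neg at hlt
        rw [hword] at hlt
        have hlt' : quotientWordDist S (g • x) x < m := by exact_mod_cast hlt
        have hne : {n : ℕ | ∃ w : List Γ, w.length = n ∧
            (∀ a ∈ w, a ∈ S ∨ a⁻¹ ∈ S) ∧ w.prod • (g • x) = x}.Nonempty :=
          ⟨(wd g⁻¹).length, wd g⁻¹, rfl, hwd1 g⁻¹, by rw [hwd2 g⁻¹]; exact inv_smul_smul g x⟩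
        obtain ⟨w, hwlen, hwS, hwact⟩ := Nat.sInf_mem hne
        have hwm : w.length ≤ m := le_of_lt (hwlen ▸ hlt')
        obtain ⟨a, rfl⟩ := QuotientGroup.mk_surjective x
        rw [MulAction.Quotient.smul_mk, MulAction.Quotient.smul_mk] at hwact
        have hmem : (w.prod * (g * a))⁻¹ * a ∈ N i := QuotientGroup.eq.1 hwact
        have hconj := (hnorm i).conj_mem _ hmem a
        have h3 : (w.prod * g)⁻¹ ∈ N i := by
          convert hconj using 1
          group
        have h4 : w.prod * g ∈ N i := by simpa using (N i).inv_mem h3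
        exact hip' i hi2 w.prod ⟨w, hwm, hwS, rfl⟩ h4
      have hterm : ∀ x : Γ ⧸ N i, C + 1 ≤ ‖u i x (g • x) - u i x x‖ ^ 2 := by
        intro x
        have hd : dist (⟨i, g • x⟩ : (i : ℕ) × (Γ ⧸ N i)) ⟨i, x⟩ ≤ l i := by
          rw [dist_comm]
          exact (hq i g x (g • x) rfl).trans hi1
        have h1 := (ht1 ⟨i, x⟩ ⟨i, g • x⟩ ⟨i, x⟩ hd (hself i x)).1
        have hRd : R ≤ dist (⟨i, g • x⟩ : (i : ℕ) × (Γ ⧸ N i)) ⟨i, x⟩ :=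
          le_trans (Nat.le_ceil R) (hAll x)
        have hs1 : Real.sqrt (C + 1) ≤ ‖u i x (g • x) - u i x x‖ := by
          simp only [hudef]
          exact le_trans (hR _ hRd) h1
        have := pow_le_pow_left₀ (Real.sqrt_nonneg _) hs1 2
        rwa [Real.sq_sqrt (by linarith : (0 : ℝ) ≤ C + 1)] at this
      have hsum : c i * (C + 1) ≤ ∑ x : Γ ⧸ N i, ‖u i x (g • x) - u i x x‖ ^ 2 := by
        have := Finset.sum_le_sum (fun x (_ : x ∈ Finset.univ) => hterm x)
        rwa [Finset.sum_const, Finset.card_univ, nsmul_eq_mul] at this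
      have : (c i)⁻¹ * (c i * (C + 1)) ≤ φ i g := by
        rw [hφdef]
        exact mul_le_mul_of_nonneg_left hsum (inv_nonneg.2 (hc i).le)
      rwa [inv_mul_cancel_left₀ (hc i).ne'] at this
    have hfg : C + 1 ≤ f g :=
      ge_of_tendsto (hf g) (Filter.Eventually.filter_mono hUle hev)
    linarith
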